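/- The difference-in-means estimator is unbiased for the average treatment effect, E[τ̂_DIM] = τ*, and its n-rescaled mean-squared error equals n·E[(τ̂_DIM − τ*)²] = (1/n)·Σ_{i=1}^n { ((1 − π_T)/π_T)·y_i(1)² + (π_T/(1 − π_T))·y_i(0)² + 2·y_i(1)·y_i(0) }. -/

import Mathlib

open MeasureTheory ProbabilityTheory
open scoped BigOperators

/-- the difference-in-means estimator is unbiased for the ATE, and its
`n`-rescaled mean-squared error has the stated exact expression. -/
theorem dim_unbiased_and_mse
    {Ω : Type*} [MeasurableSpace Ω] (P : Measure Ω) [IsProbabilityMeasure P]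
    (n : ℕ) (hn : 0 < n) (πT : ℝ) (hπT : πT ∈ Set.Ioo (0 : ℝ) 1)
    (y1 y0 : Fin n → ℝ) (T : Fin n → Ω → ℝ)
    (hTmeas : ∀ i, Measurable (T i))
    (hT01 : ∀ i ω, T i ω = 0 ∨ T i ω = 1)
    (hTber : ∀ i, P {ω | T i ω = 1} = ENNReal.ofReal πT)
    (hTindep : iIndepFun T P)
    (Y : Fin n → Ω → ℝ)
    (hY : ∀ i ω, Y i ω = if T i ω = 1 then y1 i else y0 i)
    (τstar : ℝ) (hτstar : τstar = (1 / (n : ℝ)) * ∑ i, (y1 i - y0 i))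
    (τhat : Ω → ℝ)
    (hτhat : ∀ ω, τhat ω =
      (1 / ((n : ℝ) * πT)) * ∑ i, Y i ω * T i ω
        - (1 / ((n : ℝ) * (1 - πT))) * ∑ i, Y i ω * (1 - T i ω)) :
    (∫ ω, τhat ω ∂P = τstar) ∧
      (n : ℝ) * ∫ ω, (τhat ω - τstar) ^ 2 ∂P
        = (1 / (n : ℝ)) * ∑ i,
            ((1 - πT) / πT * (y1 i) ^ 2 + πT / (1 - πT) * (y0 i) ^ 2
              + 2 * y1 i * y0 i) := by
  obtain ⟨hπ0, hπ1⟩ := hπT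
  have h1π : (0:ℝ) < 1 - πT := by linarith
  have hπ0' : πT ≠ 0 := ne_of_gt hπ0
  have h1π' : (1:ℝ) - πT ≠ 0 := ne_of_gt h1π
  have hn' : (n:ℝ) ≠ 0 := Nat.cast_ne_zero.mpr hn.ne'
  have hA : ∀ i, MeasurableSet (T i ⁻¹' {(1:ℝ)}) :=
    fun i => hTmeas i (measurableSet_singleton 1)
  have hPA : ∀ i, P (T i ⁻¹' {(1:ℝ)}) = ENNReal.ofReal πT := fun i => hTber i
  set c : Fin n → ℝ := fun i => (y1 i / πT + y0 i / (1 - πT)) / n with hc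
  have hTind : ∀ i, (fun ω => T i ω) = (T i ⁻¹' {(1:ℝ)}).indicator (fun _ => (1:ℝ)) := by
    intro i; funext ω
    rcases hT01 i ω with h | h <;>
      simp [Set.indicator_apply, Set.mem_preimage, h]
  have iT : ∀ i, Integrable (fun ω => T i ω) P := by
    intro i
    rw [hTind i]
    exact (integrable_const (1:ℝ)).indicator (hA i)
  have intT : ∀ i, ∫ ω, T i ω ∂P = πT := by
    intro i
    rw [hTind i, integral_indicator_const (1:ℝ) (hA i), measureReal_def, hPA i]
    simp [ENNReal.toReal_ofReal hπ0.le]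
  have hTTind : ∀ i j, (fun ω => T i ω * T j ω)
      = ((T i ⁻¹' {(1:ℝ)}) ∩ (T j ⁻¹' {(1:ℝ)})).indicator (fun _ => (1:ℝ)) := by
    intro i j; funext ω
    rcases hT01 i ω with h | h <;> rcases hT01 j ω with h' | h' <;>
      simp [Set.indicator_apply, Set.mem_preimage, h, h']
  have iTT : ∀ i j, Integrable (fun ω => T i ω * T j ω) P := by
    intro i j
    rw [hTTind i j]
    exact (integrable_const (1:ℝ)).indicator ((hA i).inter (hA j))
  have intTT : ∀ i j, i ≠ j → ∫ ω, T i ω * T j ω ∂P = πT * πT := by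
    intro i j hij
    rw [hTTind i j, integral_indicator_const (1:ℝ) ((hA i).inter (hA j))]
    have hind : IndepFun (T i) (T j) P := hTindep.indepFun hij
    have hmul := hind.measure_inter_preimage_eq_mul {1} {1}
      (measurableSet_singleton 1) (measurableSet_singleton 1)
    rw [measureReal_def, hmul, hPA i, hPA j, ENNReal.toReal_mul, ENNReal.toReal_ofReal hπ0.le]
    simp
  -- variance-type integrals
  have intVar : ∀ i j, ∫ ω, (T i ω - πT) * (T j ω - πT) ∂P
      = if i = j then πT * (1 - πT) else 0 := by
    intro i j
    by_cases h : i = j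
    · subst h
      rw [if_pos rfl]
      have hsq : (fun ω => (T i ω - πT) * (T i ω - πT))
          = fun ω => (1 - 2*πT) * T i ω + πT*πT := by
        funext ω; rcases hT01 i ω with h|h <;> rw [h] <;> ring
      have i1 : Integrable (fun ω => (1 - 2*πT) * T i ω) P := (iT i).const_mul _
      rw [hsq, integral_add i1 (integrable_const _),
        integral_const_mul, intT, integral_const]
      simp only [probReal_univ, ENNReal.toReal_one, smul_eq_mul, one_mul]
      ring
    · rw [if_neg h]
      have hexp : (fun ω => (T i ω - πT) * (T j ω - πT))
          = fun ω => T i ω * T j ω - πT * T i ω - πT * T j ω + πT*πT := by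
        funext ω; ring
      have i1 : Integrable (fun ω => πT * T i ω) P := (iT i).const_mul _
      have i2 : Integrable (fun ω => πT * T j ω) P := (iT j).const_mul _
      have i3 : Integrable (fun ω => T i ω * T j ω - πT * T i ω) P := (iTT i j).sub i1
      have i4 : Integrable (fun ω => T i ω * T j ω - πT * T i ω - πT * T j ω) P := i3.sub i2
      rw [hexp, integral_add i4 (integrable_const _), integral_sub i3 i2,
        integral_sub (iTT i j) i1,
        integral_const_mul, integral_const_mul, intT, intT, intTT i j h, integral_const]
      simp only [probReal_univ, ENNReal.toReal_one, smul_eq_mul, one_mul]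
      ring
  -- pointwise identity
  have hpt : ∀ ω, τhat ω - τstar = ∑ i, c i * (T i ω - πT) := by
    intro ω
    rw [hτhat ω, hτstar]
    have hY1 : ∀ i, Y i ω * T i ω = y1 i * T i ω := by
      intro i; rcases hT01 i ω with h|h <;> rw [hY i ω, h] <;> simp
    have hY0 : ∀ i, Y i ω * (1 - T i ω) = y0 i * (1 - T i ω) := by
      intro i; rcases hT01 i ω with h|h <;> rw [hY i ω, h] <;> simp
    simp only [hY1, hY0]
    rw [Finset.mul_sum, Finset.mul_sum, Finset.mul_sum,
      ← Finset.sum_sub_distrib, ← Finset.sum_sub_distrib]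
    apply Finset.sum_congr rfl
    intro i _
    rw [hc]
    field_simp
    ring
  -- part 1
  have iZ : ∀ i, Integrable (fun ω => c i * (T i ω - πT)) P := by
    intro i
    have : Integrable (fun ω => T i ω - πT) P := (iT i).sub (integrable_const _)
    exact this.const_mul _
  have intZ : ∀ i, ∫ ω, c i * (T i ω - πT) ∂P = 0 := by
    intro i
    rw [integral_const_mul, integral_sub (iT i) (integrable_const _), intT, integral_const]
    simp
  have hτhat_eq : (fun ω => τhat ω) = fun ω => τstar + ∑ i, c i * (T i ω - πT) := by
    funext ω; have := hpt ω; linarith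
  have part1 : ∫ ω, τhat ω ∂P = τstar := by
    rw [hτhat_eq, integral_add (integrable_const _)
      (integrable_finset_sum _ (fun i _ => iZ i)),
      integral_finset_sum _ (fun i _ => iZ i)]
    simp [intZ, measure_univ]
  refine ⟨part1, ?_⟩
  -- part 2
  have iZZ : ∀ i j, Integrable (fun ω => (c i * (T i ω - πT)) * (c j * (T j ω - πT))) P := by
    intro i j
    have heq : (fun ω => (c i * (T i ω - πT)) * (c j * (T j ω - πT)))
        = fun ω => (c i * c j) * (T i ω * T j ω - πT * T i ω - πT * T j ω + πT * πT) := by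
      funext ω; ring
    rw [heq]
    have i1 : Integrable (fun ω => πT * T i ω) P := (iT i).const_mul _
    have i2 : Integrable (fun ω => πT * T j ω) P := (iT j).const_mul _
    have i4 : Integrable (fun ω => T i ω * T j ω - πT * T i ω - πT * T j ω + πT * πT) P :=
      (((iTT i j).sub i1).sub i2).add (integrable_const _)
    exact i4.const_mul _
  have intZZ : ∀ i j, ∫ ω, (c i * (T i ω - πT)) * (c j * (T j ω - πT)) ∂P
      = c i * c j * (if i = j then πT * (1 - πT) else 0) := by
    intro i j
    have heq : (fun ω => (c i * (T i ω - πT)) * (c j * (T j ω - πT)))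
        = fun ω => (c i * c j) * ((T i ω - πT) * (T j ω - πT)) := by funext ω; ring
    rw [heq, integral_const_mul, intVar]
  have part2 : ∫ ω, (τhat ω - τstar)^2 ∂P = ∑ i, c i ^ 2 * (πT * (1 - πT)) := by
    have heq : (fun ω => (τhat ω - τstar)^2)
        = fun ω => ∑ i, ∑ j, (c i * (T i ω - πT)) * (c j * (T j ω - πT)) := by
      funext ω; rw [hpt ω, sq, Finset.sum_mul_sum]
    rw [heq, integral_finset_sum _ (fun i _ => integrable_finset_sum _ (fun j _ => iZZ i j))]
    apply Finset.sum_congr rfl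
    intro i _
    rw [integral_finset_sum _ (fun j _ => iZZ i j)]
    simp only [intZZ]
    rw [Finset.sum_eq_single i]
    · simp [sq]
    · intro j _ hji
      simp [if_neg (Ne.symm hji)]
    · intro hi; exact absurd (Finset.mem_univ i) hi
  rw [part2, Finset.mul_sum, Finset.mul_sum]
  apply Finset.sum_congr rfl
  intro i _
  rw [hc]
  field_simp
  ring
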